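/- arXiv:2012.14302 — 2 statements merged into one kernel-verified Lean document; each statement's English description precedes it below -/
import Mathlib

section
/- Let (G_n)_{n∈ℕ} be an inverse system of complete Hausdorff topological abelian groups, each with a linear topology admitting a countable fundamental system of open subgroups, with continuous surjective transition homomorphisms p_{m,n} : G_m → G_n for all m ≥ n ≥ 0. Then the limit G = lim_n G_n, endowed with the inverse limit topology, is a complete Hausdorff topological abelian group with a linear topology admitting a countable fundamental system of open subgroups, and each canonical projection p̂_n : G → G_n is a surjective continuous homomorphism. -/
open Filter Topology

/-- A sequence of maps between topological additive groups *converges continuously*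
to `f₀` if for every point `g` and every open subgroup `H'` of the target there exist an
open subgroup `H` of the source and an index `n₀` such that
`f n (g + x) - f₀ (g + x) ∈ H'` for every `x ∈ H` and every `n ≥ n₀`. -/
def ConvergesContinuouslyTo {G G' : Type*} [AddCommGroup G] [TopologicalSpace G]
    [AddCommGroup G'] [TopologicalSpace G'] (f : ℕ → G → G') (f₀ : G → G') : Prop :=
  ∀ g : G, ∀ H' : AddSubgroup G', IsOpen (H' : Set G') →
    ∃ H : AddSubgroup G, IsOpen (H : Set G) ∧ ∃ n₀ : ℕ,
      ∀ x ∈ H, ∀ n, n₀ ≤ n → f n (g + x) - f₀ (g + x) ∈ H'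

/-- A sequence of maps between topological additive groups *converges pointwise* to `f₀`. -/
def ConvergesPointwiseTo {G G' : Type*} [AddCommGroup G] [TopologicalSpace G]
    [AddCommGroup G'] [TopologicalSpace G'] (f : ℕ → G → G') (f₀ : G → G') : Prop :=
  ∀ g : G, ∀ H' : AddSubgroup G', IsOpen (H' : Set G') →
    ∃ n₀ : ℕ, ∀ n, n₀ ≤ n → f n g - f₀ g ∈ H'

/-- A topological abelian group has a linear topology admitting a countable decreasing
fundamental system of open subgroups starting with the whole group. -/
def HasLinearGroupTopology (G : Type*) [AddCommGroup G] [TopologicalSpace G] : Prop :=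
  ∃ H : ℕ → AddSubgroup G, H 0 = ⊤ ∧ (∀ m n : ℕ, n ≤ m → H m ≤ H n) ∧
    (∀ n, IsOpen (H n : Set G)) ∧ ∀ s ∈ nhds (0 : G), ∃ n, (H n : Set G) ⊆ s

/-- The inverse limit of an inverse system of abelian groups, as a subgroup of the
product. -/
def invLimitAddSubgroup (G : ℕ → Type*) [∀ n, AddCommGroup (G n)]
    (p : ∀ m n : ℕ, n ≤ m → (G m →+ G n)) : AddSubgroup (∀ n, G n) where
  carrier := {f | ∀ (m n : ℕ) (h : n ≤ m), p m n h (f m) = f n}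
  zero_mem' := by intro m n h; simp
  add_mem' := by
    intro f g hf hg m n h
    simp only [Pi.add_apply, map_add, hf m n h, hg m n h]
  neg_mem' := by
    intro f hf m n h
    simp only [Pi.neg_apply, map_neg, hf m n h]

private noncomputable def liftSeq (G : ℕ → Type*) [∀ n, AddCommGroup (G n)]
    (p : ∀ m n : ℕ, n ≤ m → (G m →+ G n))
    (hp_surj : ∀ (m n : ℕ) (h : n ≤ m), Function.Surjective (p m n h))
    (n : ℕ) (g : G n) : ∀ m, G m
  | 0 => p n 0 (Nat.zero_le n) g
  | (m+1) => if h : m + 1 ≤ n then p n (m+1) h g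
      else (hp_surj (m+1) m (Nat.le_succ m) (liftSeq G p hp_surj n g m)).choose

private theorem liftSeq_le (G : ℕ → Type*) [∀ n, AddCommGroup (G n)]
    (p : ∀ m n : ℕ, n ≤ m → (G m →+ G n))
    (hp_surj : ∀ (m n : ℕ) (h : n ≤ m), Function.Surjective (p m n h))
    (n : ℕ) (g : G n) : ∀ m (h : m ≤ n), liftSeq G p hp_surj n g m = p n m h g
  | 0, _ => rfl
  | (m+1), h => by rw [liftSeq, dif_pos h]

private theorem liftSeq_step (G : ℕ → Type*) [∀ n, AddCommGroup (G n)]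
    (p : ∀ m n : ℕ, n ≤ m → (G m →+ G n))
    (hp_comp : ∀ (k m n : ℕ) (hmk : m ≤ k) (hnm : n ≤ m) (g : G k),
      p m n hnm (p k m hmk g) = p k n (le_trans hnm hmk) g)
    (hp_surj : ∀ (m n : ℕ) (h : n ≤ m), Function.Surjective (p m n h))
    (n : ℕ) (g : G n) (m : ℕ) :
    p (m+1) m (Nat.le_succ m) (liftSeq G p hp_surj n g (m+1)) = liftSeq G p hp_surj n g m := by
  by_cases h : m + 1 ≤ n
  · rw [liftSeq_le G p hp_surj n g (m+1) h, hp_comp,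
      liftSeq_le G p hp_surj n g m (le_trans (Nat.le_succ m) h)]
  · rw [show liftSeq G p hp_surj n g (m+1) =
        (hp_surj (m+1) m (Nat.le_succ m) (liftSeq G p hp_surj n g m)).choose by
          rw [liftSeq, dif_neg h]]
    exact (hp_surj (m+1) m (Nat.le_succ m) (liftSeq G p hp_surj n g m)).choose_spec

private theorem liftSeq_compat (G : ℕ → Type*) [∀ n, AddCommGroup (G n)]
    (p : ∀ m n : ℕ, n ≤ m → (G m →+ G n))
    (hp_id : ∀ (n : ℕ) (g : G n), p n n le_rfl g = g)
    (hp_comp : ∀ (k m n : ℕ) (hmk : m ≤ k) (hnm : n ≤ m) (g : G k),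
      p m n hnm (p k m hmk g) = p k n (le_trans hnm hmk) g)
    (hp_surj : ∀ (m n : ℕ) (h : n ≤ m), Function.Surjective (p m n h))
    (n : ℕ) (g : G n) :
    ∀ m k (h : k ≤ m), p m k h (liftSeq G p hp_surj n g m) = liftSeq G p hp_surj n g k := by
  intro m
  induction m with
  | zero => intro k h; interval_cases k; exact hp_id 0 _
  | succ m ih =>
    intro k h
    rcases Nat.eq_or_lt_of_le h with rfl | h'
    · exact hp_id (m+1) _
    · have hk : k ≤ m := Nat.lt_succ_iff.mp h'
      calc p (m+1) k h (liftSeq G p hp_surj n g (m+1))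
          = p m k hk (p (m+1) m (Nat.le_succ m) (liftSeq G p hp_surj n g (m+1))) := by
            rw [hp_comp]
        _ = _ := by rw [liftSeq_step G p hp_comp hp_surj, ih k hk]

/-- the inverse limit of an inverse system of complete Hausdorff linearly
topologized abelian groups with continuous surjective transition maps, endowed with the
inverse limit topology, is a complete Hausdorff linearly topologized abelian group, and
the canonical projections are continuous and surjective. -/
theorem invLimit_complete_linearly_topologized
    (G : ℕ → Type*) [∀ n, AddCommGroup (G n)] [∀ n, UniformSpace (G n)]
    [∀ n, IsUniformAddGroup (G n)] [∀ n, CompleteSpace (G n)] [∀ n, T2Space (G n)]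
    (hG : ∀ n, HasLinearGroupTopology (G n))
    (p : ∀ m n : ℕ, n ≤ m → (G m →+ G n))
    (hp_id : ∀ (n : ℕ) (g : G n), p n n le_rfl g = g)
    (hp_comp : ∀ (k m n : ℕ) (hmk : m ≤ k) (hnm : n ≤ m) (g : G k),
      p m n hnm (p k m hmk g) = p k n (le_trans hnm hmk) g)
    (hp_cont : ∀ (m n : ℕ) (h : n ≤ m), Continuous (p m n h))
    (hp_surj : ∀ (m n : ℕ) (h : n ≤ m), Function.Surjective (p m n h)) :
    CompleteSpace (invLimitAddSubgroup G p) ∧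
      T2Space (invLimitAddSubgroup G p) ∧
      IsUniformAddGroup (invLimitAddSubgroup G p) ∧
      HasLinearGroupTopology (invLimitAddSubgroup G p) ∧
      ∀ n : ℕ, Continuous (fun f : invLimitAddSubgroup G p => (f : ∀ k, G k) n) ∧
        Function.Surjective (fun f : invLimitAddSubgroup G p => (f : ∀ k, G k) n)  := by
  set L := invLimitAddSubgroup G p with hL
  have hclosed : IsClosed (L : Set (∀ n, G n)) := by
    have : (L : Set (∀ n, G n)) =
        ⋂ (m : ℕ) (n : ℕ) (h : n ≤ m), {f : ∀ k, G k | p m n h (f m) = f n} := by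
      ext f
      simp only [Set.mem_iInter, Set.mem_setOf_eq]
      rfl
    rw [this]
    exact isClosed_iInter fun m => isClosed_iInter fun n => isClosed_iInter fun h =>
      isClosed_eq ((hp_cont m n h).comp (continuous_apply m)) (continuous_apply n)
  refine ⟨hclosed.completeSpace_coe, inferInstance, inferInstance, ?_, ?_⟩
  · -- linear topology
    choose Hsys h0 hmono hopen hbasis using hG
    refine ⟨fun m =>
      { carrier := {f : L | ∀ k ≤ m, (f : ∀ i, G i) k ∈ Hsys k m}
        zero_mem' := fun k _ => zero_mem _
        add_mem' := fun hf hg k hk => add_mem (hf k hk) (hg k hk)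
        neg_mem' := fun hf k hk => neg_mem (hf k hk) }, ?_, ?_, ?_, ?_⟩
    · ext f
      simp only [AddSubgroup.mem_mk, Set.mem_setOf_eq, AddSubgroup.mem_top, iff_true]
      intro k hk
      interval_cases k
      rw [h0 0]
      trivial
    · intro m n h f hf k hk
      exact hmono k m n h (hf k (le_trans hk h))
    · intro m
      have : ({f : L | ∀ k ≤ m, (f : ∀ i, G i) k ∈ Hsys k m} : Set L) =
          ⋂ k ∈ Set.Iic m, (fun f : L => (f : ∀ i, G i) k) ⁻¹' (Hsys k m) := by
        ext f; simp [Set.mem_iInter]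
      show IsOpen ({f : L | ∀ k ≤ m, (f : ∀ i, G i) k ∈ Hsys k m} : Set L)
      rw [this]
      exact (Set.finite_Iic m).isOpen_biInter fun k _ =>
        (hopen k m).preimage ((continuous_apply k).comp continuous_subtype_val)
    · intro s hs
      rw [nhds_subtype_eq_comap, Filter.mem_comap] at hs
      obtain ⟨t, ht, hts⟩ := hs
      have h0t : t ∈ nhds (0 : ∀ i, G i) := ht
      rw [nhds_pi, Filter.mem_pi] at h0t
      obtain ⟨I, hIfin, t', ht', hpi⟩ := h0t
      choose N hN using fun i => hbasis i (t' i) (ht' i)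
      obtain ⟨m, hm⟩ := (hIfin.image fun i => max i (N i)).bddAbove
      refine ⟨m, fun f hf => ?_⟩
      apply hts
      refine hpi fun i hi => ?_
      have hmi : max i (N i) ≤ m := hm (Set.mem_image_of_mem _ hi)
      exact hN i (hmono i m (N i) (le_trans (le_max_right _ _) hmi)
        (hf i (le_trans (le_max_left _ _) hmi)))
  · intro n
    refine ⟨(continuous_apply n).comp continuous_subtype_val, fun g => ?_⟩
    refine ⟨⟨liftSeq G p hp_surj n g, fun m k h => liftSeq_compat G p hp_id hp_comp hp_surj n g m k h⟩, ?_⟩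
    show liftSeq G p hp_surj n g n = g
    rw [liftSeq_le G p hp_surj n g n le_rfl, hp_id]
end

section
/- Let A be a topological ring with fundamental system of open ideals (𝔞_n)_{n∈ℕ}, let S ⊆ A be a multiplicatively closed subset containing 1, and let j̃ : A → Â_S be the separated completed localization of A with respect to S. Then for every complete topological ring B and every continuous ring homomorphism φ : A → B such that φ(s) is invertible in B for every s ∈ S, there exists a unique continuous ring homomorphism ψ : Â_S → B with φ = ψ ∘ j̃. -/
open Filter Topology

/-- A topological ring has a linear topology admitting a countable decreasing fundamental
system of open ideals starting with the whole ring. -/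
def HasLinearRingTopology (A : Type*) [CommRing A] [TopologicalSpace A] : Prop :=
  ∃ a : ℕ → Ideal A, a 0 = ⊤ ∧ (∀ m n : ℕ, n ≤ m → a m ≤ a n) ∧
    (∀ n, IsOpen (a n : Set A)) ∧ ∀ s ∈ nhds (0 : A), ∃ n, (a n : Set A) ⊆ s

variable {A : Type*} [CommRing A]

/-- The image of a multiplicatively closed subset in the quotient `A ⧸ a n`. -/
def quotImageSubmonoid (a : ℕ → Ideal A) (S : Submonoid A) (n : ℕ) :
    Submonoid (A ⧸ a n) := S.map (Ideal.Quotient.mk (a n))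

/-- Transition homomorphisms `S_m⁻¹(A/𝔞_m) → S_n⁻¹(A/𝔞_n)` of the inverse system defining
the separated completed localization. -/
noncomputable def locTrans (a : ℕ → Ideal A) (hmono : ∀ m n : ℕ, n ≤ m → a m ≤ a n)
    (S : Submonoid A) (m n : ℕ) (h : n ≤ m) :
    Localization (quotImageSubmonoid a S m) →+* Localization (quotImageSubmonoid a S n) :=
  IsLocalization.map (M := quotImageSubmonoid a S m) (T := quotImageSubmonoid a S n)
    (Localization (quotImageSubmonoid a S n))
    (Ideal.Quotient.factor (hmono m n h))
    (by
      intro x hx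
      obtain ⟨s, hs, rfl⟩ := Submonoid.mem_map (f := Ideal.Quotient.mk (a m)) |>.mp hx
      refine Submonoid.mem_comap.mpr
        (Submonoid.mem_map (f := Ideal.Quotient.mk (a n)) |>.mpr ⟨s, hs, ?_⟩)
      exact (Ideal.Quotient.factor_mk (hmono m n h) s).symm)

/-- The separated completed localization `Â_S = lim_n S_n⁻¹(A/𝔞_n)`, as a subring of the
product of the (discrete) localizations. -/
noncomputable def locInvLimit (a : ℕ → Ideal A) (hmono : ∀ m n : ℕ, n ≤ m → a m ≤ a n)
    (S : Submonoid A) :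
    Subring (∀ n, Localization (quotImageSubmonoid a S n)) where
  carrier := {f | ∀ (m n : ℕ) (h : n ≤ m), locTrans a hmono S m n h (f m) = f n}
  zero_mem' := by intro m n h; simp
  one_mem' := by intro m n h; simp
  add_mem' := by
    intro f g hf hg m n h
    simp only [Pi.add_apply, map_add, hf m n h, hg m n h]
  mul_mem' := by
    intro f g hf hg m n h
    simp only [Pi.mul_apply, map_mul, hf m n h, hg m n h]
  neg_mem' := by
    intro f hf m n h
    simp only [Pi.neg_apply, map_neg, hf m n h]

/-- The canonical separated completed localization homomorphism `j̃ : A → Â_S`,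
as a function. -/
noncomputable def locInvLimitMk (a : ℕ → Ideal A) (hmono : ∀ m n : ℕ, n ≤ m → a m ≤ a n)
    (S : Submonoid A) (x : A) : locInvLimit a hmono S :=
  ⟨fun n => algebraMap (A ⧸ a n) (Localization (quotImageSubmonoid a S n))
      (Ideal.Quotient.mk (a n) x),
    fun m n h => by
      simp only [locTrans, IsLocalization.map_eq, Ideal.Quotient.factor_mk]⟩

/-- Each localization `S_n⁻¹(A/𝔞_n)` carries the discrete topology. -/
local instance (priority := 10000) locTopDiscrete {R : Type*} [CommMonoid R]
    (M : Submonoid R) : TopologicalSpace (Localization M) := ⊥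


section Aux

variable {A : Type*} [CommRing A]

/-- Image of `s : S` in the quotient submonoid. -/
noncomputable def qsElem (a : ℕ → Ideal A) (S : Submonoid A) (n : ℕ) (s : S) :
    quotImageSubmonoid a S n := ⟨Ideal.Quotient.mk (a n) (s : A), ⟨s, s.2, rfl⟩⟩

/-- The fraction `x/s` in the localization at level `n`. -/
noncomputable def mkfr (a : ℕ → Ideal A) (S : Submonoid A) (n : ℕ) (x : A) (s : S) :
    Localization (quotImageSubmonoid a S n) :=
  IsLocalization.mk' _ (Ideal.Quotient.mk (a n) x) (qsElem a S n s)

lemma mkfr_surjective (a : ℕ → Ideal A) (S : Submonoid A) (n : ℕ)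
    (z : Localization (quotImageSubmonoid a S n)) :
    ∃ (x : A) (s : S), z = mkfr a S n x s := by
  obtain ⟨⟨q, m⟩, rfl⟩ := IsLocalization.mk'_surjective (quotImageSubmonoid a S n) z
  obtain ⟨x, rfl⟩ := Ideal.Quotient.mk_surjective q
  obtain ⟨s, hs, hs'⟩ := m.2
  refine ⟨x, ⟨s, hs⟩, ?_⟩
  unfold mkfr qsElem
  congr 1
  have hm : m = ⟨Ideal.Quotient.mk (a n) s, ⟨s, hs, rfl⟩⟩ := Subtype.ext hs'.symm
  subst hm
  rfl

lemma qsElem_mul (a : ℕ → Ideal A) (S : Submonoid A) (n : ℕ) (s t : S) :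
    qsElem a S n (s * t) = qsElem a S n s * qsElem a S n t := by
  apply Subtype.ext; simp [qsElem]

lemma mkfr_mul (a : ℕ → Ideal A) (S : Submonoid A) (n : ℕ) (x y : A) (s t : S) :
    mkfr a S n x s * mkfr a S n y t = mkfr a S n (x * y) (s * t) := by
  unfold mkfr
  rw [qsElem_mul, map_mul, IsLocalization.mk'_mul]

lemma mkfr_add (a : ℕ → Ideal A) (S : Submonoid A) (n : ℕ) (x y : A) (s t : S) :
    mkfr a S n x s + mkfr a S n y t = mkfr a S n (x * t + y * s) (s * t) := by
  unfold mkfr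
  rw [qsElem_mul, map_add, map_mul, map_mul, ← IsLocalization.mk'_add]
  rfl

lemma mkfr_one (a : ℕ → Ideal A) (S : Submonoid A) (n : ℕ) :
    mkfr a S n 1 1 = 1 := by
  unfold mkfr
  have : qsElem a S n 1 = 1 := by apply Subtype.ext; simp [qsElem]
  rw [this, map_one, IsLocalization.mk'_one, map_one]

lemma mkfr_zero (a : ℕ → Ideal A) (S : Submonoid A) (n : ℕ) :
    mkfr a S n 0 1 = 0 := by
  unfold mkfr
  rw [map_zero, IsLocalization.mk'_zero]

lemma algebraMap_eq_mkfr (a : ℕ → Ideal A) (S : Submonoid A) (n : ℕ) (x : A) :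
    algebraMap (A ⧸ a n) (Localization (quotImageSubmonoid a S n))
      (Ideal.Quotient.mk (a n) x) = mkfr a S n x 1 := by
  unfold mkfr
  have : qsElem a S n 1 = 1 := by apply Subtype.ext; simp [qsElem]
  rw [this, IsLocalization.mk'_one]

lemma mkfr_self (a : ℕ → Ideal A) (S : Submonoid A) (n : ℕ) (s : S) :
    mkfr a S n (s : A) s = 1 := by
  unfold mkfr
  have h1 : (Ideal.Quotient.mk (a n)) (s : A) = ((qsElem a S n s : quotImageSubmonoid a S n) : A ⧸ a n) := rfl
  rw [h1]
  exact IsLocalization.mk'_self' (S := Localization (quotImageSubmonoid a S n)) (x := qsElem a S n s)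

lemma locTrans_mkfr (a : ℕ → Ideal A) (hmono : ∀ m n : ℕ, n ≤ m → a m ≤ a n)
    (S : Submonoid A) (m n : ℕ) (h : n ≤ m) (x : A) (s : S) :
    locTrans a hmono S m n h (mkfr a S m x s) = mkfr a S n x s := by
  unfold locTrans mkfr
  rw [IsLocalization.map_mk']
  have h1 : (Ideal.Quotient.factor (hmono m n h)) ((Ideal.Quotient.mk (a m)) x)
      = (Ideal.Quotient.mk (a n)) x := Ideal.Quotient.factor_mk _ _
  rw [h1]
  congr 1

lemma mkfr_eq (a : ℕ → Ideal A) (S : Submonoid A) (n : ℕ) {x y : A} {s t : S}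
    (h : mkfr a S n x s = mkfr a S n y t) :
    ∃ c ∈ S, c * ((t : A) * x) - c * ((s : A) * y) ∈ a n := by
  unfold mkfr at h
  rw [IsLocalization.eq] at h
  obtain ⟨c, hc⟩ := h
  obtain ⟨c', hc', hcc⟩ := c.2
  refine ⟨c', hc', ?_⟩
  rw [← Ideal.Quotient.eq_zero_iff_mem]
  have : (c : A ⧸ a n) = Ideal.Quotient.mk (a n) c' := hcc.symm
  rw [this] at hc
  rw [map_sub]
  have hc2 : Ideal.Quotient.mk (a n) (c' * (↑t * x)) = Ideal.Quotient.mk (a n) (c' * (↑s * y)) := by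
    simpa [map_mul, qsElem] using hc
  rw [map_mul, map_mul] at hc2 ⊢
  rw [hc2]
  ring

end Aux

section AuxB

variable {A : Type*} [CommRing A] {B : Type*} [CommRing B]

/-- The value `φ(x)·φ(s)⁻¹` in `B` of a formal fraction `x/s`. -/
noncomputable def frval (φ : A →+* B) (x s : A) : B := φ x * Ring.inverse (φ s)

lemma frval_mul (φ : A →+* B) (x y s t : A) :
    frval φ (x * y) (s * t) = frval φ x s * frval φ y t := by
  unfold frval
  rw [map_mul, map_mul, Ring.mul_inverse_rev]
  ring

lemma frval_add (φ : A →+* B) (x y s t : A) (hs : IsUnit (φ s)) (ht : IsUnit (φ t)) :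
    frval φ (x * t + y * s) (s * t) = frval φ x s + frval φ y t := by
  unfold frval
  have h1 : φ s * Ring.inverse (φ s) = 1 := Ring.mul_inverse_cancel _ hs
  have h2 : φ t * Ring.inverse (φ t) = 1 := Ring.mul_inverse_cancel _ ht
  rw [map_add, map_mul, map_mul, map_mul, Ring.mul_inverse_rev]
  linear_combination (φ x * Ring.inverse (φ s)) * h2 + (φ y * Ring.inverse (φ t)) * h1

lemma frval_one (φ : A →+* B) : frval φ 1 1 = 1 := by
  simp [frval, Ring.inverse_one]

lemma frval_zero (φ : A →+* B) (s : A) : frval φ 0 s = 0 := by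
  simp [frval]

lemma frval_cong (a : ℕ → Ideal A) (S : Submonoid A) (n : ℕ) (φ : A →+* B)
    (hunit : ∀ s ∈ S, IsUnit (φ s)) {x y : A} {s t : S}
    (h : mkfr a S n x s = mkfr a S n y t) (b : Ideal B) (hb : ∀ z ∈ a n, φ z ∈ b) :
    frval φ x s - frval φ y t ∈ b := by
  obtain ⟨c, hc, hw⟩ := mkfr_eq a S n h
  have hφw : φ (c * (↑t * x) - c * (↑s * y)) ∈ b := hb _ hw
  have hcu : φ c * Ring.inverse (φ c) = 1 := Ring.mul_inverse_cancel _ (hunit c hc)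
  have hsu : φ s * Ring.inverse (φ (s : A)) = 1 := Ring.mul_inverse_cancel _ (hunit s s.2)
  have htu : φ t * Ring.inverse (φ (t : A)) = 1 := Ring.mul_inverse_cancel _ (hunit t t.2)
  have key : frval φ x s - frval φ y t =
      φ (c * (↑t * x) - c * (↑s * y)) *
        (Ring.inverse (φ c) * (Ring.inverse (φ (s : A)) * Ring.inverse (φ (t : A)))) := by
    unfold frval
    rw [map_sub, map_mul, map_mul, map_mul, map_mul]
    linear_combination
      (-(φ ↑t * φ x * Ring.inverse (φ (s : A)) * Ring.inverse (φ (t : A))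
          - φ ↑s * φ y * Ring.inverse (φ (s : A)) * Ring.inverse (φ (t : A)))) * hcu
      + (-(φ x * Ring.inverse (φ (s : A)))) * htu
      + (φ y * Ring.inverse (φ (t : A))) * hsu
  rw [key]
  exact Ideal.mul_mem_right _ _ hφw

end AuxB

section AuxC

open Filter

lemma cauchySeq_of_sub_tendsto {G : Type*} [AddCommGroup G] [UniformSpace G] [IsUniformAddGroup G]
    {u : ℕ → G} (h : Tendsto (fun p : ℕ × ℕ => u p.2 - u p.1) (atTop ×ˢ atTop) (𝓝 0)) :
    CauchySeq u := by
  refine ⟨map_neBot, ?_⟩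
  rw [Filter.prod_map_map_eq, uniformity_eq_comap_nhds_zero G, ← map_le_iff_le_comap,
    Filter.map_map]
  exact h

end AuxC

section AuxD

variable {A : Type*} [CommRing A] {B : Type*} [CommRing B]

lemma frval_den_one (φ : A →+* B) (x : A) (S : Submonoid A) :
    frval φ x ((1 : S) : A) = φ x := by
  simp [frval, Ring.inverse_one]

/-- The inverse of `j̃ s` in the completed localization. -/
noncomputable def jinv (a : ℕ → Ideal A) (hmono : ∀ m n : ℕ, n ≤ m → a m ≤ a n)
    (S : Submonoid A) (s : S) : locInvLimit a hmono S :=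
  ⟨fun n => mkfr a S n 1 s, fun m n h => locTrans_mkfr a hmono S m n h 1 s⟩

lemma jinv_mul (a : ℕ → Ideal A) (hmono : ∀ m n : ℕ, n ≤ m → a m ≤ a n)
    (S : Submonoid A) (s : S) :
    locInvLimitMk a hmono S (s : A) * jinv a hmono S s = 1 := by
  apply Subtype.ext
  funext n
  show (locInvLimitMk a hmono S (s : A)).1 n * (jinv a hmono S s).1 n = 1
  show (algebraMap (A ⧸ a n) (Localization (quotImageSubmonoid a S n))
      (Ideal.Quotient.mk (a n) (s : A))) * mkfr a S n 1 s = 1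
  rw [algebraMap_eq_mkfr, mkfr_mul, mul_one, one_mul, mkfr_self]

/-- The value sequence of an element of the completed localization, with respect to chosen
representations. -/
noncomputable def psiVal (a : ℕ → Ideal A) (hmono : ∀ m n : ℕ, n ≤ m → a m ≤ a n)
    (S : Submonoid A) (φ : A →+* B)
    (num : ∀ n, Localization (quotImageSubmonoid a S n) → A)
    (den : ∀ n, Localization (quotImageSubmonoid a S n) → S)
    (f : locInvLimit a hmono S) (n : ℕ) : B :=
  frval φ (num n (f.1 n)) ((den n (f.1 n) : A))

end AuxD

set_option synthInstance.maxHeartbeats 1000000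

local instance (priority := 10000) {R : Type*} [CommMonoid R] (M : Submonoid R) :
    DiscreteTopology (Localization M) := ⟨rfl⟩


/-- universal property of the separated completed localization: every
continuous ring homomorphism `φ : A → B` to a complete topological ring `B` sending `S`
to units factors uniquely through `j̃ : A → Â_S` via a continuous ring homomorphism. -/
theorem completedLocalization_universal_property
    (A : Type*) [CommRing A] [TopologicalSpace A] [IsTopologicalRing A]
    (a : ℕ → Ideal A) (ha0 : a 0 = ⊤) (hmono : ∀ m n : ℕ, n ≤ m → a m ≤ a n)
    (hopen : ∀ n, IsOpen (a n : Set A))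
    (hbasis : ∀ s ∈ nhds (0 : A), ∃ n, (a n : Set A) ⊆ s)
    (S : Submonoid A)
    (B : Type*) [CommRing B] [UniformSpace B] [IsUniformAddGroup B] [IsTopologicalRing B]
    [CompleteSpace B] [T2Space B] (hB : HasLinearRingTopology B)
    (φ : A →+* B) (hφ : Continuous φ) (hunit : ∀ s ∈ S, IsUnit (φ s)) :
    ∃! ψ : locInvLimit a hmono S →+* B,
      Continuous ψ ∧ ∀ x : A, ψ (locInvLimitMk a hmono S x) = φ x := by
  classical
  obtain ⟨b, hb0, hbmono, hbopen, hbbasis⟩ := hB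
  choose num den hrep using fun n => mkfr_surjective a S n
  have hmem : ∀ (f : locInvLimit a hmono S) (m n : ℕ) (h : n ≤ m),
      locTrans a hmono S m n h (f.1 m) = f.1 n := fun f => f.2
  have hbφ : ∀ k, ∃ N, ∀ z ∈ a N, φ z ∈ b k := by
    intro k
    have h0 : (b k : Set B) ∈ 𝓝 (0 : B) := (hbopen k).mem_nhds (b k).zero_mem
    have h1 : φ ⁻¹' (b k) ∈ 𝓝 (0 : A) := by
      have h2 := hφ.tendsto 0
      rw [map_zero] at h2
      exact h2 h0
    obtain ⟨N, hN⟩ := hbasis _ h1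
    exact ⟨N, fun z hz => hN hz⟩
  -- the master congruence lemma
  have key : ∀ (f : locInvLimit a hmono S) (k N : ℕ), (∀ z ∈ a N, φ z ∈ b k) →
      ∀ m, N ≤ m → ∀ (x : A) (s : S), f.1 N = mkfr a S N x s →
      psiVal a hmono S φ num den f m - frval φ x s ∈ b k := by
    intro f k N hk m hm x s hfN
    have h1 : mkfr a S N (num m (f.1 m)) (den m (f.1 m)) = mkfr a S N x s := by
      rw [← locTrans_mkfr a hmono S m N hm, ← hrep m (f.1 m), hmem f m N hm, hfN]
    exact frval_cong a S N φ hunit h1 (b k) hk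
  have key2 : ∀ (f : locInvLimit a hmono S) (k N : ℕ), (∀ z ∈ a N, φ z ∈ b k) →
      ∀ m, N ≤ m → ∀ (x : A) (s : S), f.1 m = mkfr a S m x s →
      psiVal a hmono S φ num den f m - frval φ x s ∈ b k := by
    intro f k N hk m hm x s hfm
    exact key f k m (fun z hz => hk z (hmono m N hm hz)) m le_rfl x s hfm
  have cauchy : ∀ f, CauchySeq (psiVal a hmono S φ num den f) := by
    intro f
    apply cauchySeq_of_sub_tendsto
    rw [Filter.tendsto_def]
    intro U hU
    obtain ⟨k, hk⟩ := hbbasis U hU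
    obtain ⟨N, hN⟩ := hbφ k
    have hp : {p : ℕ × ℕ | N ≤ p.1 ∧ N ≤ p.2} ∈ (atTop ×ˢ atTop : Filter (ℕ × ℕ)) :=
      prod_mem_prod (Filter.mem_atTop N) (Filter.mem_atTop N)
    refine Filter.mem_of_superset hp ?_
    rintro ⟨m1, m2⟩ ⟨h1, h2⟩
    simp only [Set.mem_preimage]
    have e1 := key f k N hN m1 h1 _ _ (hrep N (f.1 N))
    have e2 := key f k N hN m2 h2 _ _ (hrep N (f.1 N))
    have e3 : psiVal a hmono S φ num den f m2 - psiVal a hmono S φ num den f m1 ∈ b k := by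
      have := sub_mem e2 e1
      simpa using this
    exact hk e3
  have hlim : ∀ f, Tendsto (psiVal a hmono S φ num den f) atTop
      (𝓝 (limUnder atTop (psiVal a hmono S φ num den f))) := fun f =>
    (cauchy f).tendsto_limUnder
  have congr_lim : ∀ (u v : ℕ → B) (c : B), Tendsto v atTop (𝓝 c) →
      (∀ k, ∃ N, ∀ m, N ≤ m → u m - v m ∈ b k) → Tendsto u atTop (𝓝 c) := by
    intro u v c hv h
    have h0 : Tendsto (fun n => u n - v n) atTop (𝓝 0) := by
      rw [Filter.tendsto_def]
      intro U hU
      obtain ⟨k, hk⟩ := hbbasis U hU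
      obtain ⟨N, hN⟩ := h k
      refine Filter.mem_of_superset (Filter.mem_atTop N) ?_
      intro m hm
      exact hk (hN m hm)
    have h1 := h0.add hv
    simpa using h1
  -- homomorphism laws for the limit function
  have hmul : ∀ f g : locInvLimit a hmono S,
      limUnder atTop (psiVal a hmono S φ num den (f * g)) =
      limUnder atTop (psiVal a hmono S φ num den f) *
        limUnder atTop (psiVal a hmono S φ num den g) := by
    intro f g
    refine tendsto_nhds_unique (hlim (f * g)) (congr_lim _
      (fun n => psiVal a hmono S φ num den f n * psiVal a hmono S φ num den g n) _
      ((hlim f).mul (hlim g)) ?_)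
    intro k
    obtain ⟨N, hN⟩ := hbφ k
    refine ⟨N, fun m hm => ?_⟩
    have hfg : (f * g).1 m = mkfr a S m (num m (f.1 m) * num m (g.1 m))
        (den m (f.1 m) * den m (g.1 m)) := by
      have h1 : (f * g).1 m = f.1 m * g.1 m := rfl
      rw [h1]
      conv_lhs => rw [hrep m (f.1 m), hrep m (g.1 m)]
      rw [mkfr_mul]
    have h2 := key2 (f * g) k N hN m hm _ _ hfg
    have h3 : frval φ (num m (f.1 m) * num m (g.1 m))
        ((den m (f.1 m) * den m (g.1 m) : S) : A) =
        psiVal a hmono S φ num den f m * psiVal a hmono S φ num den g m := by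
      rw [Submonoid.coe_mul, frval_mul]
      rfl
    rwa [h3] at h2
  have hadd : ∀ f g : locInvLimit a hmono S,
      limUnder atTop (psiVal a hmono S φ num den (f + g)) =
      limUnder atTop (psiVal a hmono S φ num den f) +
        limUnder atTop (psiVal a hmono S φ num den g) := by
    intro f g
    refine tendsto_nhds_unique (hlim (f + g)) (congr_lim _
      (fun n => psiVal a hmono S φ num den f n + psiVal a hmono S φ num den g n) _
      ((hlim f).add (hlim g)) ?_)
    intro k
    obtain ⟨N, hN⟩ := hbφ k
    refine ⟨N, fun m hm => ?_⟩
    have hfg : (f + g).1 m = mkfr a S m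
        (num m (f.1 m) * (den m (g.1 m) : A) + num m (g.1 m) * (den m (f.1 m) : A))
        (den m (f.1 m) * den m (g.1 m)) := by
      have h1 : (f + g).1 m = f.1 m + g.1 m := rfl
      rw [h1]
      conv_lhs => rw [hrep m (f.1 m), hrep m (g.1 m)]
      rw [mkfr_add]
    have h2 := key2 (f + g) k N hN m hm _ _ hfg
    have h3 : frval φ (num m (f.1 m) * (den m (g.1 m) : A) + num m (g.1 m) * (den m (f.1 m) : A))
        ((den m (f.1 m) * den m (g.1 m) : S) : A) =
        psiVal a hmono S φ num den f m + psiVal a hmono S φ num den g m := by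
      rw [Submonoid.coe_mul, frval_add φ _ _ _ _ (hunit _ (den m (f.1 m)).2)
        (hunit _ (den m (g.1 m)).2)]
      rfl
    rwa [h3] at h2
  have hone : limUnder atTop (psiVal a hmono S φ num den 1) = 1 := by
    refine tendsto_nhds_unique (hlim 1) (congr_lim _ (fun _ => 1) _ tendsto_const_nhds ?_)
    intro k
    obtain ⟨N, hN⟩ := hbφ k
    refine ⟨N, fun m hm => ?_⟩
    have h1 : (1 : locInvLimit a hmono S).1 m = mkfr a S m 1 1 := by
      rw [mkfr_one]; rfl
    have h2 := key2 1 k N hN m hm 1 1 h1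
    have h3 : frval φ 1 ((1 : S) : A) = 1 := by
      rw [frval_den_one, map_one]
    rwa [h3] at h2
  have hzero : limUnder atTop (psiVal a hmono S φ num den 0) = 0 := by
    refine tendsto_nhds_unique (hlim 0) (congr_lim _ (fun _ => 0) _ tendsto_const_nhds ?_)
    intro k
    obtain ⟨N, hN⟩ := hbφ k
    refine ⟨N, fun m hm => ?_⟩
    have h1 : (0 : locInvLimit a hmono S).1 m = mkfr a S m 0 1 := by
      rw [mkfr_zero]; rfl
    have h2 := key2 0 k N hN m hm 0 1 h1
    have h3 : frval φ 0 ((1 : S) : A) = 0 := frval_zero φ _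
    rw [sub_zero]
    rwa [h3, sub_zero] at h2
  let ψ : locInvLimit a hmono S →+* B :=
    { toFun := fun f => limUnder atTop (psiVal a hmono S φ num den f)
      map_one' := hone
      map_mul' := hmul
      map_zero' := hzero
      map_add' := hadd }
  have hψval : ∀ f, ψ f = limUnder atTop (psiVal a hmono S φ num den f) := fun _ => rfl
  -- the factorization property
  have hspec : ∀ x : A, ψ (locInvLimitMk a hmono S x) = φ x := by
    intro x
    rw [hψval]
    refine tendsto_nhds_unique (hlim _) (congr_lim _ (fun _ => φ x) _ tendsto_const_nhds ?_)
    intro k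
    obtain ⟨N, hN⟩ := hbφ k
    refine ⟨N, fun m hm => ?_⟩
    have h1 : (locInvLimitMk a hmono S x).1 m = mkfr a S m x 1 := algebraMap_eq_mkfr a S m x
    have h2 := key2 _ k N hN m hm x 1 h1
    rwa [frval_den_one] at h2
  -- continuity
  have hcont : Continuous ψ := by
    apply continuous_of_continuousAt_zero ψ
    unfold ContinuousAt
    rw [map_zero, Filter.tendsto_def]
    intro U hU
    obtain ⟨k, hk⟩ := hbbasis U hU
    obtain ⟨N, hN⟩ := hbφ k
    have hV : {f : locInvLimit a hmono S | f.1 N = 0} ∈ 𝓝 (0 : locInvLimit a hmono S) := by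
      have hc : Continuous (fun f : locInvLimit a hmono S => f.1 N) :=
        (continuous_apply N).comp continuous_subtype_val
      have hopen' : IsOpen {f : locInvLimit a hmono S | f.1 N = 0} :=
        (isOpen_discrete {(0 : Localization (quotImageSubmonoid a S N))}).preimage hc
      exact hopen'.mem_nhds rfl
    refine Filter.mem_of_superset hV ?_
    intro f hf
    simp only [Set.mem_preimage]
    apply hk
    have hclosed : IsClosed ((b k : Set B)) :=
      AddSubgroup.isClosed_of_isOpen (b k).toAddSubgroup (hbopen k)
    have hev : ∀ m, N ≤ m → psiVal a hmono S φ num den f m ∈ b k := by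
      intro m hm
      have hfN : f.1 N = mkfr a S N 0 1 := by rw [mkfr_zero]; exact hf
      have h2 := key f k N hN m hm 0 1 hfN
      have h3 : frval φ 0 ((1 : S) : A) = 0 := frval_zero φ _
      rwa [h3, sub_zero] at h2
    have hmemcl : ψ f ∈ closure ((b k : Set B)) :=
      mem_closure_of_tendsto (hψval f ▸ hlim f) (Filter.eventually_atTop.2 ⟨N, hev⟩)
    rwa [hclosed.closure_eq] at hmemcl
  -- uniqueness of the factorization
  have huniq : ∀ ψ₁ ψ₂ : locInvLimit a hmono S →+* B, Continuous ψ₁ →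
      (∀ x : A, ψ₁ (locInvLimitMk a hmono S x) = φ x) → Continuous ψ₂ →
      (∀ x : A, ψ₂ (locInvLimitMk a hmono S x) = φ x) → ψ₁ = ψ₂ := by
    intro ψ₁ ψ₂ hc1 hs1 hc2 hs2
    ext f
    set hseq : ℕ → locInvLimit a hmono S := fun m =>
      locInvLimitMk a hmono S (num m (f.1 m)) * jinv a hmono S (den m (f.1 m)) with hseq_def
    have hcomp : ∀ m k, (hseq m).1 k = mkfr a S k (num m (f.1 m)) (den m (f.1 m)) := by
      intro m k
      show (locInvLimitMk a hmono S (num m (f.1 m))).1 k *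
        (jinv a hmono S (den m (f.1 m))).1 k = _
      show (algebraMap (A ⧸ a k) (Localization (quotImageSubmonoid a S k))
          (Ideal.Quotient.mk (a k) (num m (f.1 m)))) * mkfr a S k 1 (den m (f.1 m)) = _
      rw [algebraMap_eq_mkfr, mkfr_mul, mul_one, one_mul]
    have htend : Tendsto hseq atTop (𝓝 f) := by
      rw [IsEmbedding.subtypeVal.tendsto_nhds_iff]
      rw [show (Subtype.val ∘ hseq) = fun m => (hseq m).1 from rfl]
      rw [tendsto_pi_nhds]
      intro k
      have hev : ∀ m, k ≤ m → (hseq m).1 k = f.1 k := by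
        intro m hm
        rw [hcomp m k, ← locTrans_mkfr a hmono S m k hm, ← hrep m (f.1 m), hmem f m k hm]
      exact Filter.Tendsto.congr'
        (Filter.eventually_atTop.2 ⟨k, fun m hm => (hev m hm).symm⟩) tendsto_const_nhds
    have hval : ∀ (ψ' : locInvLimit a hmono S →+* B),
        (∀ x : A, ψ' (locInvLimitMk a hmono S x) = φ x) →
        ∀ m, ψ' (hseq m) = frval φ (num m (f.1 m)) ((den m (f.1 m) : A)) := by
      intro ψ' hs' m
      have hinv : ψ' (jinv a hmono S (den m (f.1 m))) =
          Ring.inverse (φ ((den m (f.1 m) : A))) := by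
        have h1 : φ ((den m (f.1 m) : A)) * ψ' (jinv a hmono S (den m (f.1 m))) = 1 := by
          rw [← hs' ((den m (f.1 m) : A)), ← map_mul, jinv_mul, map_one]
        have hu := hunit _ (den m (f.1 m)).2
        calc ψ' (jinv a hmono S (den m (f.1 m)))
            = Ring.inverse (φ ((den m (f.1 m) : A))) *
              (φ ((den m (f.1 m) : A)) * ψ' (jinv a hmono S (den m (f.1 m)))) := by
              rw [← mul_assoc, Ring.inverse_mul_cancel _ hu, one_mul]
          _ = Ring.inverse (φ ((den m (f.1 m) : A))) := by rw [h1, mul_one]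
      rw [hseq_def]
      show ψ' (locInvLimitMk a hmono S (num m (f.1 m)) * jinv a hmono S (den m (f.1 m))) = _
      rw [map_mul, hs', hinv]
      rfl
    have t1 : Tendsto (fun m => ψ₁ (hseq m)) atTop (𝓝 (ψ₁ f)) := (hc1.tendsto f).comp htend
    have t2 : Tendsto (fun m => ψ₂ (hseq m)) atTop (𝓝 (ψ₂ f)) := (hc2.tendsto f).comp htend
    have e1 : (fun m => ψ₁ (hseq m)) =
        fun m => frval φ (num m (f.1 m)) ((den m (f.1 m) : A)) := funext (hval ψ₁ hs1)
    have e2 : (fun m => ψ₂ (hseq m)) =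
        fun m => frval φ (num m (f.1 m)) ((den m (f.1 m) : A)) := funext (hval ψ₂ hs2)
    rw [e1] at t1
    rw [e2] at t2
    exact tendsto_nhds_unique t1 t2
  exact ⟨ψ, ⟨hcont, hspec⟩, fun ψ' h' => huniq ψ' ψ h'.1 h'.2 hcont hspec⟩
end
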